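/- Let f : ℕ → (0,∞) be defined by f(1) = f(2) = 1 and f(n) = (log log n)/n for n ≥ 3, let c > 0, μ ∈ ℝ, and let X_1, X_2, … be i.i.d. ∼ N(μ,1). Let μ̂ = (μ̂_n)_{n∈ℕ} be an estimator, i.e. each μ̂_n : ℝⁿ → ℝ is measurable, and set μ̃_n = (Σ_{i=1}^n X_i)/(n+1). Define the events 𝓕_{μ,n} = { (μ − μ̃_n)² ≥ c·f(n) } and 𝓖_n = { (μ̃_n − μ̂_n(X^n))² ≥ (c/2)·f(n) }. If P_μ( 𝓕_{μ,n} ∩ 𝓖_n^c occurs for infinitely many n ) > 0, then for every nonincreasing g : ℕ → (0,∞) with f(n)/g(n) → ∞ one has sup_{τ∈𝒯} E_{X^∞ ∼ N(μ,1)^{⊗ℕ}}[ (μ − μ̂_τ(X^τ))² / g(τ) ] = ∞, where 𝒯 is the collection of all almost-surely finite stopping times with respect to the natural filtration σ(X_1,…,X_n). -/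

import Mathlib

open MeasureTheory ProbabilityTheory Filter

/-- The time-robust rate function: `f n = (log log n)/n` for `n ≥ 3`, `f 1 = f 2 = 1`. -/
noncomputable def f (n : ℕ) : ℝ := if n ≤ 2 then 1 else Real.log (Real.log n) / n

/-- The natural filtration of the data: `natFilt X hX n = σ(X_0, …, X_{n-1})`,
the σ-algebra generated by the first `n` observations. -/
noncomputable def natFilt {Ω β : Type*} [mΩ : MeasurableSpace Ω] [MeasurableSpace β]
    (X : ℕ → Ω → β) (hX : ∀ i, Measurable (X i)) : Filtration ℕ mΩ where
  seq n := ⨆ i ∈ Finset.range n, MeasurableSpace.comap (X i) inferInstance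
  mono' := fun _ _ hnm => biSup_mono fun _ hi =>
    Finset.mem_range.mpr (lt_of_lt_of_le (Finset.mem_range.mp hi) hnm)
  le' _ := iSup₂_le fun i _ => (hX i).comap_le

lemma f_pos (n : ℕ) : 0 < f n := by
  unfold f; split_ifs with h
  · norm_num
  · push_neg at h
    have hn3 : (3:ℝ) ≤ (n:ℝ) := by exact_mod_cast h
    have hlog : 1 < Real.log n := by
      have he : Real.exp 1 < 3 := by
        have := Real.exp_one_lt_d9; linarith
      calc (1:ℝ) = Real.log (Real.exp 1) := (Real.log_exp 1).symm
        _ < Real.log n := Real.log_lt_log (Real.exp_pos 1) (by linarith)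
    exact div_pos (Real.log_pos hlog) (by linarith)

lemma key_sq {c F a b : ℝ} (hc : 0 < c) (hF : 0 < F)
    (h1 : c * F ≤ a ^ 2) (h2 : b ^ 2 < c / 2 * F) :
    (1 - Real.sqrt 2⁻¹) ^ 2 * (c * F) ≤ (a + b) ^ 2 := by
  set t := Real.sqrt 2⁻¹ with ht
  set s := Real.sqrt (c * F) with hsdef
  have ht0 : 0 ≤ t := Real.sqrt_nonneg _
  have ht1 : t ≤ 1 := by
    rw [ht, show (1:ℝ) = Real.sqrt 1 by simp]
    exact Real.sqrt_le_sqrt (by norm_num)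
  have hs0 : 0 ≤ s := Real.sqrt_nonneg _
  have hsa : s ≤ |a| := by
    rw [hsdef, ← Real.sqrt_sq_eq_abs]; exact Real.sqrt_le_sqrt h1
  have hbs : |b| ≤ s * t := by
    rw [hsdef, ht, ← Real.sqrt_sq_eq_abs, ← Real.sqrt_mul (by positivity)]
    exact Real.sqrt_le_sqrt (by nlinarith)
  have hsq : s ^ 2 = c * F := Real.sq_sqrt (by positivity)
  have h3 : s * (1 - t) ≤ |a| - |b| := by nlinarith
  have h4 : 0 ≤ s * (1 - t) := mul_nonneg hs0 (by linarith)
  have h5 : (|a| - |b|) ^ 2 ≤ (a + b) ^ 2 := by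
    nlinarith [neg_abs_le (a * b), abs_mul a b, sq_abs a, sq_abs b, abs_nonneg a, abs_nonneg b]
  calc (1 - t) ^ 2 * (c * F) = (s * (1 - t)) ^ 2 := by rw [mul_pow, hsq]; ring
    _ ≤ (|a| - |b|) ^ 2 := pow_le_pow_left₀ h4 h3 2
    _ ≤ (a + b) ^ 2 := h5

lemma sqrt_half_lt_one : Real.sqrt 2⁻¹ < 1 := by
  rw [show (1:ℝ) = Real.sqrt 1 by simp]
  exact Real.sqrt_lt_sqrt (by norm_num) (by norm_num)

/-- with `X 0, X 1, …` i.i.d. `N(μ,1)`, `μ̃ n = (Σ_{i<n} X i)/(n+1)` the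
posterior mean under the standard Gaussian prior, and events
`𝓕_{μ,n} = {(μ - μ̃ n)² ≥ c f n}` and `𝓖 n = {(μ̃ n - μ̂ n (X^n))² ≥ (c/2) f n}`: if
`P(𝓕_{μ,n} ∩ 𝓖 nᶜ  i.o.) > 0` then for every nonincreasing `g : ℕ → (0,∞)` with
`f n / g n → ∞`, the supremum over a.s.-finite stopping times `τ` of
`E[(μ - μ̂_τ(X^τ))²/g(τ)]` is infinite. -/
theorem case_far_from_posterior_mean_with_small_G
    (c : ℝ) (hc : 0 < c) (μ : ℝ)
    (Ω : Type) (mΩ : MeasurableSpace Ω) (P : Measure Ω) [IsProbabilityMeasure P]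
    (X : ℕ → Ω → ℝ) (hX : ∀ i, Measurable (X i))
    (hindep : iIndepFun X P)
    (hlaw : ∀ i, Measure.map (X i) P = gaussianReal μ 1)
    (muhat : (n : ℕ) → (Fin n → ℝ) → ℝ) (hmeas : ∀ n, Measurable (muhat n))
    (mutilde : ℕ → Ω → ℝ)
    (hmutilde : mutilde = fun n ω => (∑ i ∈ Finset.range n, X i ω) / ((n : ℝ) + 1))
    (hio : 0 < P {ω | ∃ᶠ n in atTop,
      c * f n ≤ (μ - mutilde n ω) ^ 2 ∧
        (mutilde n ω - muhat n fun i => X i.val ω) ^ 2 < c / 2 * f n})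
    (g : ℕ → ℝ) (hgpos : ∀ n, 0 < g n) (hganti : Antitone g)
    (hfg : Tendsto (fun n => f n / g n) atTop atTop) :
    ⨆ (τ : Ω → ℕ) (_ : IsStoppingTime (natFilt X hX) (fun ω => (τ ω : WithTop ℕ))),
        ∫⁻ ω, ENNReal.ofReal
          ((μ - muhat (τ ω) fun i => X i.val ω) ^ 2 / g (τ ω)) ∂P = ⊤ := by
  classical
  rw [iSup_eq_top]
  intro b hb
  -- constants
  set κ : ℝ := (1 - Real.sqrt 2⁻¹) ^ 2 * c with hκdef
  have hκ : 0 < κ := by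
    have h1 : 0 < 1 - Real.sqrt 2⁻¹ := by linarith [sqrt_half_lt_one]
    rw [hκdef]; positivity
  -- probability of the i.o. event
  set S := {ω | ∃ᶠ n in atTop,
      c * f n ≤ (μ - mutilde n ω) ^ 2 ∧
        (mutilde n ω - muhat n fun i => X i.val ω) ^ 2 < c / 2 * f n} with hS
  set q : ENNReal := P S with hq
  have hq0 : q ≠ 0 := hio.ne'
  have hqtop : q ≠ ⊤ := (measure_lt_top P S).ne
  have hhalf0 : q / 2 ≠ 0 := by
    simp only [ne_eq, ENNReal.div_eq_zero_iff]
    push_neg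
    exact ⟨hq0, by norm_num⟩
  have hhalftop : q / 2 ≠ ⊤ := by
    exact (ENNReal.div_lt_top hqtop (by norm_num)).ne
  -- choose M
  set r : ENNReal := b / (q / 2) with hr
  have hrtop : r ≠ ⊤ := (ENNReal.div_lt_top hb.ne hhalf0).ne
  set M : ℝ := (r.toReal + 1) / κ with hM
  have hκM : κ * M = r.toReal + 1 := by
    rw [hM]; field_simp
  have hbM : b < ENNReal.ofReal (κ * M) * (q / 2) := by
    have h1 : r < ENNReal.ofReal (κ * M) := by
      rw [hκM]
      calc r = ENNReal.ofReal r.toReal := (ENNReal.ofReal_toReal hrtop).symm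
        _ < ENNReal.ofReal (r.toReal + 1) := by
            rw [ENNReal.ofReal_lt_ofReal_iff (by positivity)]
            linarith
    have h2 : b = r * (q / 2) := (ENNReal.div_mul_cancel hhalf0 hhalftop).symm
    rw [h2]
    exact ENNReal.mul_lt_mul_left hhalf0 hhalftop h1
  -- choose N
  obtain ⟨N, hN⟩ := eventually_atTop.mp (hfg.eventually_ge_atTop M)
  -- the process and target set
  set u : ℕ → Ω → ℝ × ℝ := fun n ω =>
    ((μ - mutilde n ω) ^ 2 / f n,
      (mutilde n ω - muhat n fun i => X i.val ω) ^ 2 / f n) with hu_def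
  set s : Set (ℝ × ℝ) := Set.Ici c ×ˢ Set.Iio (c / 2) with hs_def
  have hs : MeasurableSet s := (measurableSet_Ici).prod (measurableSet_Iio)
  -- measurability wrt the filtration
  have hXm : ∀ n, ∀ i, i < n → Measurable[natFilt X hX n] (X i) := by
    intro n i hi
    refine Measurable.of_comap_le ?_
    exact le_biSup (fun i => MeasurableSpace.comap (X i) inferInstance)
      (Finset.mem_range.mpr hi)
  have hmut : ∀ n, Measurable[natFilt X hX n] (mutilde n) := by
    intro n
    rw [hmutilde]
    exact (Finset.measurable_sum _ fun i hi =>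
      hXm n i (Finset.mem_range.mp hi)).div_const _
  have hhat : ∀ n, Measurable[natFilt X hX n]
      (fun ω => muhat n fun i => X i.val ω) := by
    intro n
    have hY : Measurable[natFilt X hX n] (fun ω (i : Fin n) => X i.val ω) :=
      @measurable_pi_lambda Ω (Fin n) (fun _ => ℝ) (natFilt X hX n) _ _
        (fun i => hXm n i.val i.isLt)
    exact (hmeas n).comp hY
  have hu : Adapted (natFilt X hX) u := by
    intro n
    exact Measurable.prodMk
      (((measurable_const.sub (hmut n)).pow_const 2).div_const _)
      ((((hmut n).sub (hhat n)).pow_const 2).div_const _)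
  have humeas : ∀ n, Measurable (u n) :=
    fun n => (hu n).mono ((natFilt X hX).le n) le_rfl
  -- hit sets
  set H : ℕ → Set Ω := fun L => ⋃ j ∈ Set.Icc N L, u j ⁻¹' s with hH
  have hHmono : Monotone H := by
    intro L L' hLL'
    exact Set.biUnion_subset_biUnion_left (Set.Icc_subset_Icc le_rfl hLL')
  have hmemH : ∀ L ω, ω ∈ H L ↔ ∃ j ∈ Set.Icc N L, u j ω ∈ s := by
    intro L ω
    simp [hH]
  have hSsub : S ⊆ ⋃ L, H L := by
    intro ω hω
    obtain ⟨n, hA, hn⟩ := (hω.and_eventually (eventually_ge_atTop N)).exists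
    refine Set.mem_iUnion.mpr ⟨n, (hmemH n ω).mpr ⟨n, ⟨hn, le_rfl⟩, ?_⟩⟩
    constructor
    · exact (le_div_iff₀ (f_pos n)).mpr hA.1
    · exact (div_lt_iff₀ (f_pos n)).mpr hA.2
  have htend := tendsto_measure_iUnion_atTop (μ := P) hHmono
  have hqle : q ≤ P (⋃ L, H L) := measure_mono hSsub
  have hhalflt : q / 2 < P (⋃ L, H L) :=
    lt_of_lt_of_le (ENNReal.half_lt_self hq0 hqtop) hqle
  obtain ⟨L, hL⟩ := (htend.eventually (eventually_gt_nhds hhalflt)).exists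
  -- the stopping time
  refine ⟨hittingBtwn u s N L, ?_⟩
  rw [iSup_pos (show IsStoppingTime (natFilt X hX)
    (fun ω => ((hittingBtwn u s N L ω : ℕ) : WithTop ℕ)) from hu.isStoppingTime_hittingBtwn hs)]
  set τ : Ω → ℕ := hittingBtwn u s N L with hτ
  -- pointwise lower bound on H L
  have hHmeas : MeasurableSet (H L) :=
    MeasurableSet.biUnion (Set.to_countable _) fun j _ => (humeas j) hs
  have hbound : ∀ ω ∈ H L, ENNReal.ofReal (κ * M) ≤
      ENNReal.ofReal ((μ - muhat (τ ω) fun i => X i.val ω) ^ 2 / g (τ ω)) := by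
    intro ω hω
    obtain ⟨j, hj, hjs⟩ := (hmemH L ω).mp hω
    have hex : ∃ j ∈ Set.Icc N L, u j ω ∈ s := ⟨j, hj, hjs⟩
    have hmem := hittingBtwn_mem_set (u := u) (s := s) hex
    have hτN : N ≤ τ ω := le_hittingBtwn_of_exists hex
    obtain ⟨h1, h2⟩ := hmem
    simp only [Set.mem_Ici] at h1
    simp only [Set.mem_Iio] at h2
    have h1' : c * f (τ ω) ≤ (μ - mutilde (τ ω) ω) ^ 2 :=
      (le_div_iff₀ (f_pos _)).mp h1
    have h2' : (mutilde (τ ω) ω - muhat (τ ω) fun i => X i.val ω) ^ 2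
        < c / 2 * f (τ ω) := (div_lt_iff₀ (f_pos _)).mp h2
    have hkey : κ * f (τ ω) ≤ (μ - muhat (τ ω) fun i => X i.val ω) ^ 2 := by
      have h := key_sq hc (f_pos (τ ω)) h1' h2'
      have heq : (μ - mutilde (τ ω) ω) + (mutilde (τ ω) ω
          - muhat (τ ω) fun i => X i.val ω)
          = μ - muhat (τ ω) fun i => X i.val ω := by ring
      rw [heq] at h
      calc κ * f (τ ω) = (1 - Real.sqrt 2⁻¹) ^ 2 * (c * f (τ ω)) := by
            rw [hκdef]; ring
        _ ≤ _ := h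
    have hgτ := hgpos (τ ω)
    refine ENNReal.ofReal_le_ofReal ?_
    have hMτ : M ≤ f (τ ω) / g (τ ω) := hN _ hτN
    calc κ * M ≤ κ * (f (τ ω) / g (τ ω)) :=
          mul_le_mul_of_nonneg_left hMτ hκ.le
      _ = κ * f (τ ω) / g (τ ω) := by ring
      _ ≤ _ := div_le_div_of_nonneg_right hkey hgτ.le
  -- conclude
  calc b < ENNReal.ofReal (κ * M) * (q / 2) := hbM
    _ ≤ ENNReal.ofReal (κ * M) * P (H L) := mul_le_mul_right hL.le _
    _ = ∫⁻ ω, (H L).indicator (fun _ => ENNReal.ofReal (κ * M)) ω ∂P := by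
        rw [lintegral_indicator hHmeas, setLIntegral_const]
    _ ≤ ∫⁻ ω, ENNReal.ofReal
          ((μ - muhat (τ ω) fun i => X i.val ω) ^ 2 / g (τ ω)) ∂P := by
        refine lintegral_mono fun ω => ?_
        by_cases hω : ω ∈ H L
        · simpa [Set.indicator_of_mem hω] using hbound ω hω
        · simp [Set.indicator_of_notMem hω]
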